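/- Let γ be a gamma function on a group (G,·) with circle operation x ∘ y = γ(y)(x)·y. Then the set N := { (x ↦ γ(y)(x)·y) : y ∈ G } is a subgroup of the symmetric group Sym(G) contained in the holomorph Hol(G), N acts regularly on G (transitively with trivial point stabilizers), and the map ν : (G,∘) → N sending y to the permutation x ↦ x ∘ y is a group isomorphism. -/

import Mathlib

/-- For a gamma function `γ` on `(G,·)` with circle operation
`x ∘ y = γ(y)(x)·y`, the set `N = { x ↦ γ(y)(x)·y : y ∈ G }` is a subgroup of
`Sym(G)` contained in the holomorph `Hol(G) = N_{Sym(G)}(ρ(G))`, `N` is regular,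
and `ν : (G,∘) → N`, `y ↦ (x ↦ x ∘ y)` is a group isomorphism
(a bijective map with `ν(y₁ ∘ y₂) = ν(y₁)ν(y₂)`, applying `ν(y₁)` first). -/
theorem stmt3 {G : Type*} [Group G] (γ : G → MulAut G)
    (hγ : ∀ x y g : G, γ (γ y x * y) g = γ y (γ x g))
    (circ : G → G → G) (hcirc : ∀ x y : G, circ x y = γ y x * y)
    (ν : G → Equiv.Perm G)
    (hν : ∀ y : G, ν y = (γ y).toEquiv.trans (Equiv.mulRight y))
    (ρ : G → Equiv.Perm G) (hρ : ∀ g : G, ρ g = Equiv.mulRight g)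
    (Hol : Subgroup (Equiv.Perm G))
    (hHol : Hol = Subgroup.normalizer (Subgroup.closure (Set.range ρ))) :
    ∃ N : Subgroup (Equiv.Perm G),
      (N : Set (Equiv.Perm G)) = Set.range ν ∧
      N ≤ Hol ∧
      (∀ x z : G, ∃! p : Equiv.Perm G, p ∈ N ∧ p x = z) ∧
      Function.Injective ν ∧
      (∀ y₁ y₂ x : G, ν (circ y₁ y₂) x = ν y₂ (ν y₁ x)) := by
  have hνx : ∀ y x : G, ν y x = γ y x * y := by intro y x; rw [hν]; rfl
  have key : ∀ y₁ y₂ x : G, ν (circ y₁ y₂) x = ν y₂ (ν y₁ x) := by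
    intro a b x
    simp only [hνx, hcirc, hγ, map_mul, mul_assoc]
  have hγ1 : ∀ g : G, γ 1 g = g := by
    intro g
    have h := hγ 1 1 ((γ 1)⁻¹ g)
    simpa using h.symm
  have hν1 : ∀ y : G, ν y 1 = y := by intro y; simp [hνx]
  have hνone : ν 1 = 1 := by
    ext x; simp [hνx, hγ1]
  set inv' : G → G := fun y => (γ y)⁻¹ y⁻¹ with hinv'
  have hinvl : ∀ y : G, circ (inv' y) y = 1 := by
    intro y; simp [hcirc, hinv']
  have honel : ∀ y : G, circ 1 y = y := by intro y; simp [hcirc]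
  have hνinv : ∀ y : G, ν (inv' y) = (ν y)⁻¹ := by
    intro y
    have h : ν y * ν (inv' y) = 1 := by
      ext x
      have := (key (inv' y) y x).symm
      rw [hinvl, hνone] at this
      simpa using this
    exact eq_inv_of_mul_eq_one_right h
  have hassoc : ∀ a b c : G, circ (circ a b) c = circ a (circ b c) := by
    intro a b c
    have h1 : ν (circ (circ a b) c) 1 = ν (circ a (circ b c)) 1 := by
      rw [key, key, key, key]
    simpa [hν1] using h1
  have hcancel : ∀ a b x : G, ν a x = ν b x → ν a = ν b := by
    intro a b x h
    set c := circ a (inv' b) with hc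
    have hcx : ν c x = x := by
      rw [hc, key, h, hνinv]
      exact Equiv.symm_apply_apply (ν b) x
    have hxc : circ x c = x := by
      rw [hcirc, ← hνx]; exact hcx
    have hc1 : c = 1 := by
      calc c = circ (circ (inv' x) x) c := by rw [hinvl, honel]
        _ = circ (inv' x) (circ x c) := hassoc _ _ _
        _ = 1 := by rw [hxc, hinvl]
    have : ν c = 1 := by rw [hc1, hνone]
    ext t
    have h2 : ν c t = t := by rw [this]; rfl
    have h3 := (key a (inv' b) t).symm
    rw [← hc, h2, hνinv] at h3
    -- h3 : (ν b)⁻¹ (ν a t) = t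
    have := congrArg (ν b) h3
    simpa using this
  have hinj : Function.Injective ν := by
    intro a b h
    have := congrArg (fun p : Equiv.Perm G => p 1) h
    simpa [hν1] using this
  -- the subgroup
  refine ⟨{ carrier := Set.range ν
            one_mem' := ⟨1, hνone⟩
            mul_mem' := ?_
            inv_mem' := ?_ }, rfl, ?_, ?_, hinj, key⟩
  · rintro p q ⟨a, rfl⟩ ⟨b, rfl⟩
    refine ⟨circ b a, ?_⟩
    ext x
    rw [key]; rfl
  · rintro p ⟨a, rfl⟩
    exact ⟨inv' a, hνinv a⟩
  · -- N ≤ Hol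
    rw [hHol]
    rintro p ⟨y, rfl⟩
    have conjρ : ∀ (w g : G), ν w * ρ g * (ν w)⁻¹ = ρ (w⁻¹ * γ w g * w) := by
      intro w g
      ext t
      have hinvy : (ν w)⁻¹ t = (γ w)⁻¹ (t * w⁻¹) := by
        have h1 : ν w ((γ w)⁻¹ (t * w⁻¹)) = t := by simp [hνx]
        rw [Equiv.Perm.inv_def, Equiv.symm_apply_eq]
        exact h1.symm
      simp [Equiv.Perm.mul_apply, hρ, hinvy, hνx, map_mul, mul_assoc]
    have stepB : ∀ (w : G) (h : Equiv.Perm G),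
        h ∈ Subgroup.closure (Set.range ρ) →
        ν w * h * (ν w)⁻¹ ∈ Subgroup.closure (Set.range ρ) := by
      intro w h hh
      refine Subgroup.closure_induction ?_ ?_ ?_ ?_ hh
      · rintro p ⟨g, rfl⟩
        rw [conjρ]
        exact Subgroup.subset_closure ⟨_, rfl⟩
      · simpa using Subgroup.one_mem _
      · intro p q _ _ ihp ihq
        have e : ν w * (p * q) * (ν w)⁻¹ =
            (ν w * p * (ν w)⁻¹) * (ν w * q * (ν w)⁻¹) := by group
        rw [e]; exact Subgroup.mul_mem _ ihp ihq
      · intro p _ ihp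
        have e : ν w * p⁻¹ * (ν w)⁻¹ = (ν w * p * (ν w)⁻¹)⁻¹ := by group
        rw [e]; exact Subgroup.inv_mem _ ihp
    rw [Subgroup.mem_normalizer_iff]
    intro h
    constructor
    · intro hh; exact stepB y h hh
    · intro hh
      have h2 := stepB (inv' y) _ hh
      rw [hνinv] at h2
      have e : (ν y)⁻¹ * (ν y * h * (ν y)⁻¹) * ((ν y)⁻¹)⁻¹ = h := by group
      rwa [e] at h2
  · -- regularity
    intro x z
    have hx1 : (ν x)⁻¹ x = 1 := by
      have h : (ν x)⁻¹ (ν x 1) = 1 := Equiv.symm_apply_apply (ν x) 1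
      rwa [hν1] at h
    refine ⟨ν (circ (inv' x) z), ⟨⟨_, rfl⟩, ?_⟩, ?_⟩
    · rw [key, hνinv, hx1, hν1]
    · rintro q ⟨⟨b, rfl⟩, hq⟩
      refine hcancel b _ x ?_
      rw [hq, key, hνinv, hx1, hν1]
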